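/- If A is invertible with ‖A⁻¹‖ < 1 (operator 2-norm) and ν ∈ (0,1), then the map G(x) = x - νA⁻¹(Ax - |x| - b) is a contraction with Lipschitz constant 1 - ν + ν‖A⁻¹‖ < 1; consequently Ax - |x| = b has a unique solution for every b ∈ ℝ^n. -/

import Mathlib

open Matrix

/-- Componentwise absolute value of a vector. -/
def vecAbs {n : ℕ} (x : EuclideanSpace ℝ (Fin n)) : EuclideanSpace ℝ (Fin n) :=
  WithLp.toLp 2 (fun i => |x i|)

/-- The operator 2-norm of a matrix. -/
noncomputable def opNorm {n : ℕ} (A : Matrix (Fin n) (Fin n) ℝ) : ℝ :=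
  ‖LinearMap.toContinuousLinearMap (Matrix.toEuclideanLin A)‖

lemma vecAbs_lip {n : ℕ} (x y : EuclideanSpace ℝ (Fin n)) :
    ‖vecAbs x - vecAbs y‖ ≤ ‖x - y‖ := by
  rw [EuclideanSpace.norm_eq, EuclideanSpace.norm_eq]
  apply Real.sqrt_le_sqrt
  apply Finset.sum_le_sum
  intro i _
  have h1 : (vecAbs x - vecAbs y) i = |x i| - |y i| := rfl
  have h2 : (x - y) i = x i - y i := rfl
  rw [h1, h2]
  have := abs_abs_sub_abs_le_abs_sub (x i) (y i)
  simp only [Real.norm_eq_abs]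
  exact pow_le_pow_left₀ (abs_nonneg _) this 2

lemma opNorm_le {n : ℕ} (A : Matrix (Fin n) (Fin n) ℝ) (v : EuclideanSpace ℝ (Fin n)) :
    ‖Matrix.toEuclideanLin A v‖ ≤ opNorm A * ‖v‖ :=
  (LinearMap.toContinuousLinearMap (Matrix.toEuclideanLin A)).le_opNorm v

/-- If `A` is invertible with `‖A⁻¹‖ < 1` and `ν ∈ (0,1)`, then
`G(x) = x - νA⁻¹(Ax - |x| - b)` is a contraction with Lipschitz constant
`1 - ν + ν‖A⁻¹‖ < 1`; consequently `Ax - |x| = b` has a unique solution for every `b`. -/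
theorem inverse_fixed_point_contraction (n : ℕ) (A : Matrix (Fin n) (Fin n) ℝ)
    (hA : IsUnit A) (hinv : opNorm A⁻¹ < 1) (ν : ℝ) (hν : ν ∈ Set.Ioo (0 : ℝ) 1)
    (b : EuclideanSpace ℝ (Fin n)) :
    let G : EuclideanSpace ℝ (Fin n) → EuclideanSpace ℝ (Fin n) :=
      fun x => x - ν • Matrix.toEuclideanLin A⁻¹ (Matrix.toEuclideanLin A x - vecAbs x - b)
    (1 - ν + ν * opNorm A⁻¹ < 1 ∧
      ∀ x y : EuclideanSpace ℝ (Fin n),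
        ‖G x - G y‖ ≤ (1 - ν + ν * opNorm A⁻¹) * ‖x - y‖) ∧
      ∀ c : EuclideanSpace ℝ (Fin n),
        ∃! x : EuclideanSpace ℝ (Fin n), Matrix.toEuclideanLin A x - vecAbs x = c := by
  obtain ⟨hν0, hν1⟩ := hν
  have hdet : IsUnit A.det := (Matrix.isUnit_iff_isUnit_det A).mp hA
  set L := Matrix.toEuclideanLin A with hL
  set Li := Matrix.toEuclideanLin A⁻¹ with hLi
  have hLiL : ∀ v, Li (L v) = v := by
    intro v
    have : Li (L v) = Matrix.toEuclideanLin (A⁻¹ * A) v := by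
      simp [hL, hLi, Matrix.toEuclideanLin_apply, Matrix.mulVec_mulVec]
    rw [this, Matrix.nonsing_inv_mul A hdet]
    simp [Matrix.toEuclideanLin_apply]
  have hLLi : ∀ v, L (Li v) = v := by
    intro v
    have : L (Li v) = Matrix.toEuclideanLin (A * A⁻¹) v := by
      simp [hL, hLi, Matrix.toEuclideanLin_apply, Matrix.mulVec_mulVec]
    rw [this, Matrix.mul_nonsing_inv A hdet]
    simp [Matrix.toEuclideanLin_apply]
  set K : ℝ := 1 - ν + ν * opNorm A⁻¹ with hK
  have hK1 : K < 1 := by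
    rw [hK]; nlinarith [mul_lt_mul_of_pos_left hinv hν0]
  have hK0 : 0 ≤ K := by
    rw [hK]
    have h0 : (0:ℝ) ≤ opNorm A⁻¹ := norm_nonneg _
    nlinarith [mul_nonneg hν0.le h0]
  -- the key Lipschitz estimate, for arbitrary shift c
  have key : ∀ (c : EuclideanSpace ℝ (Fin n)) (x y : EuclideanSpace ℝ (Fin n)),
      ‖(x - ν • Li (L x - vecAbs x - c)) - (y - ν • Li (L y - vecAbs y - c))‖ ≤ K * ‖x - y‖ := by
    intro c x y
    have hdiff : (x - ν • Li (L x - vecAbs x - c)) - (y - ν • Li (L y - vecAbs y - c))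
        = (1 - ν) • (x - y) + ν • Li (vecAbs x - vecAbs y) := by
      have h1 : Li (L x - vecAbs x - c) = Li (L x) - Li (vecAbs x) - Li c := by
        simp [map_sub]
      have h2 : Li (L y - vecAbs y - c) = Li (L y) - Li (vecAbs y) - Li c := by
        simp [map_sub]
      have h3 : Li (vecAbs x - vecAbs y) = Li (vecAbs x) - Li (vecAbs y) := map_sub _ _ _
      rw [h1, h2, h3, hLiL x, hLiL y]
      module
    rw [hdiff]
    calc ‖(1 - ν) • (x - y) + ν • Li (vecAbs x - vecAbs y)‖
        ≤ ‖(1 - ν) • (x - y)‖ + ‖ν • Li (vecAbs x - vecAbs y)‖ := norm_add_le _ _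
      _ = (1 - ν) * ‖x - y‖ + ν * ‖Li (vecAbs x - vecAbs y)‖ := by
          rw [norm_smul, norm_smul, Real.norm_eq_abs, Real.norm_eq_abs,
            abs_of_pos hν0, abs_of_pos (by linarith : (0:ℝ) < 1 - ν)]
      _ ≤ (1 - ν) * ‖x - y‖ + ν * (opNorm A⁻¹ * ‖vecAbs x - vecAbs y‖) := by
          gcongr
          exact opNorm_le A⁻¹ _
      _ ≤ (1 - ν) * ‖x - y‖ + ν * (opNorm A⁻¹ * ‖x - y‖) := by
          gcongr
          · exact norm_nonneg _
          · exact vecAbs_lip x y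
      _ = K * ‖x - y‖ := by ring
  refine ⟨⟨hK1, fun x y => key b x y⟩, ?_⟩
  intro c
  set Gc : EuclideanSpace ℝ (Fin n) → EuclideanSpace ℝ (Fin n) :=
    fun x => x - ν • Li (L x - vecAbs x - c) with hGc
  have hfix : ∀ x, Gc x = x ↔ L x - vecAbs x = c := by
    intro x
    constructor
    · intro h
      have h1 : ν • Li (L x - vecAbs x - c) = 0 := by
        have := sub_eq_self.mp h
        exact this
      have h2 : Li (L x - vecAbs x - c) = 0 := by
        rcases smul_eq_zero.mp h1 with h | h
        · exact absurd h (ne_of_gt hν0)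
        · exact h
      have h3 : L x - vecAbs x - c = 0 := by
        have := congrArg L h2
        rw [hLLi] at this
        simpa using this
      exact sub_eq_zero.mp h3
    · intro h
      have h0 : L x - vecAbs x - c = 0 := by rw [h]; simp
      show x - ν • Li (L x - vecAbs x - c) = x
      rw [h0, map_zero, smul_zero, sub_zero]
  have hlip : LipschitzWith ⟨K, hK0⟩ Gc := by
    apply LipschitzWith.of_dist_le_mul
    intro x y
    rw [dist_eq_norm, dist_eq_norm]
    exact key c x y
  have hcontr : ContractingWith ⟨K, hK0⟩ Gc := ⟨by exact_mod_cast hK1, hlip⟩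
  refine ⟨hcontr.fixedPoint Gc, ?_, ?_⟩
  · exact (hfix _).mp hcontr.fixedPoint_isFixedPt
  · intro y hy
    exact hcontr.fixedPoint_unique ((hfix y).mpr hy)
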